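/- For |z| < 1, Σ_{m=1}^∞ (2z)^{2m}/binom(2m,m) · m = z(z√(1−z²)·3 + arcsin(z)·(2z²+1))/(2(1−z²)^{5/2}) (the case n = 1 of Lehmer's formula, using p_1(x) = 3 and q_1(x) = 2x+1). -/

import Mathlib

open MeasureTheory intervalIntegral Real Filter


lemma J_succ (m : ℕ) :
    (2*(m:ℝ)+3) * ∫ s in (0:ℝ)..1, (1-s^2)^(m+1) =
      (2*(m:ℝ)+2) * ∫ s in (0:ℝ)..1, (1-s^2)^m := by
  have key : ∀ s : ℝ, HasDerivAt (fun s : ℝ => s * (1-s^2)^(m+1))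
      ((2*(m:ℝ)+3) * (1-s^2)^(m+1) - (2*(m:ℝ)+2) * (1-s^2)^m) s := by
    intro s
    have h1 : HasDerivAt (fun s : ℝ => 1 - s^2) (-(2*s)) s := by
      simpa using ((hasDerivAt_pow 2 s).const_sub 1)
    have h2 := (hasDerivAt_id s).mul (h1.pow (m+1))
    simp only [id, Pi.pow_apply] at h2
    refine h2.congr_deriv ?_
    push_cast
    ring
  have hint : ∀ k : ℕ, IntervalIntegrable (fun s : ℝ => (1-s^2)^k) volume 0 1 :=
    fun k => (by fun_prop : Continuous fun s : ℝ => (1-s^2)^k).intervalIntegrable 0 1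
  have h := intervalIntegral.integral_eq_sub_of_hasDerivAt (fun s _ => key s)
    (((hint (m+1)).const_mul _).sub ((hint m).const_mul _))
  rw [intervalIntegral.integral_sub ((hint (m+1)).const_mul _) ((hint m).const_mul _),
    intervalIntegral.integral_const_mul, intervalIntegral.integral_const_mul] at h
  norm_num at h
  linarith


lemma J_eq (m : ℕ) : ∫ s in (0:ℝ)..1, (1-s^2)^m
    = 4^m / ((2*(m:ℝ)+1) * (Nat.centralBinom m : ℝ)) := by
  induction m with
  | zero => simp [Nat.centralBinom]
  | succ m ih =>
    have h := J_succ m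
    rw [ih] at h
    rw [mul_div_assoc'] at h
    have hcb : (0:ℝ) < (Nat.centralBinom m : ℝ) := by
      exact_mod_cast m.centralBinom_pos
    have hcb1 : (0:ℝ) < (Nat.centralBinom (m+1) : ℝ) := by
      exact_mod_cast (m+1).centralBinom_pos
    have hrec : ((m:ℝ)+1) * (Nat.centralBinom (m+1) : ℝ)
        = 2 * (2*(m:ℝ)+1) * (Nat.centralBinom m : ℝ) := by
      exact_mod_cast congrArg (Nat.cast : ℕ → ℝ) (Nat.succ_mul_centralBinom_succ m)
    have h1 : (0:ℝ) < 2*(m:ℝ)+1 := by positivity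
    rw [eq_div_iff (by positivity)] at h
    rw [eq_div_iff (by positivity)]
    refine mul_left_cancel₀ (show ((m:ℝ)+1) ≠ 0 by positivity) ?_
    push_cast
    linear_combination 2*h + (∫ s in (0:ℝ)..1, (1-s^2)^(m+1))*(2*(m:ℝ)+3)*hrec


lemma term_eq (z : ℝ) (m : ℕ) :
    (2 * z) ^ (2 * (m + 1)) / (Nat.choose (2 * (m + 1)) (m + 1) : ℝ) * ((m : ℝ) + 1)
      = ∫ s in (0:ℝ)..1, ((m:ℝ)+1)*(2*(m:ℝ)+3)*(z^2*(1-s^2))^(m+1) := by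
  have : ∀ s : ℝ, ((m:ℝ)+1)*(2*(m:ℝ)+3)*(z^2*(1-s^2))^(m+1)
      = (((m:ℝ)+1)*(2*(m:ℝ)+3)*(z^2)^(m+1)) * (1-s^2)^(m+1) := fun s => by
    rw [mul_pow]; ring
  rw [intervalIntegral.integral_congr (g := fun s =>
      (((m:ℝ)+1)*(2*(m:ℝ)+3)*(z^2)^(m+1)) * (1-s^2)^(m+1)) (fun s _ => this s),
    intervalIntegral.integral_const_mul, J_eq (m+1)]
  have hcb : (0:ℝ) < (Nat.centralBinom (m+1) : ℝ) := by
    exact_mod_cast (m+1).centralBinom_pos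
  have hch : ((Nat.choose (2 * (m + 1)) (m + 1)) : ℝ) = (Nat.centralBinom (m+1) : ℝ) := by
    rw [Nat.centralBinom]
  rw [hch, pow_mul]
  have h3 : (0:ℝ) < 2*(m:ℝ)+3 := by positivity
  push_cast
  field_simp
  ring

lemma hasSum_aux {w : ℝ} (h0 : 0 ≤ w) (h1 : w < 1) :
    HasSum (fun m : ℕ => ((m:ℝ)+1)*(2*(m:ℝ)+3)*w^(m+1)) (w*(3+w)/(1-w)^3) := by
  have hw : ‖w‖ < 1 := by rw [Real.norm_eq_abs, abs_of_nonneg h0]; exact h1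
  have h2 := hasSum_choose_mul_geometric_of_norm_lt_one 2 hw
  have h1' := hasSum_choose_mul_geometric_of_norm_lt_one 1 hw
  have hcomb := ((h2.mul_left 4).sub h1').mul_left w
  have hne : (1:ℝ) - w ≠ 0 := by linarith
  have hfun : (fun m:ℕ => ((m:ℝ)+1)*(2*(m:ℝ)+3)*w^(m+1))
      = fun i:ℕ => w*(4*((((i+2).choose 2):ℝ)*w^i) - (((i+1).choose 1):ℝ)*w^i) := by
    funext n
    have hc2 : ((n+2).choose 2 : ℝ) * 2 = ((n:ℝ)+2)*((n:ℝ)+1) := by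
      rw [Nat.choose_two_right]
      have hd : 2 ∣ (n+2)*(n+2-1) := by
        simpa [Nat.mul_comm] using (Nat.even_mul_succ_self (n+1)).two_dvd
      rw [Nat.cast_div hd (by norm_num : (2:ℝ) ≠ 0)]
      push_cast [Nat.add_sub_cancel]
      field_simp
    have hc1 : ((n+1).choose 1 : ℝ) = (n:ℝ)+1 := by
      rw [Nat.choose_one_right]; push_cast; ring
    rw [hc1]
    linear_combination (-2*w^(n+1))*hc2
  have hval : w*(3+w)/(1-w)^3 = w*(4*(1/(1-w)^(2+1)) - 1/(1-w)^(1+1)) := by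
    field_simp
    ring
  rw [hfun, hval]
  exact hcomb

lemma integral_G (z : ℝ) (hz : |z| < 1) :
    (∫ s in (0:ℝ)..1, z^2*(1-s^2)*(3+z^2*(1-s^2))/(1-z^2*(1-s^2))^3)
      = z * (3 * (z * Real.sqrt (1 - z ^ 2)) + Real.arcsin z * (2 * z ^ 2 + 1)) /
        (2 * (1 - z ^ 2) ^ ((5 : ℝ) / 2)) := by
  have hz2 : z^2 < 1 := by
    have := abs_nonneg z
    nlinarith [sq_abs z]
  have hc : (0:ℝ) < 1 - z^2 := by linarith
  set r : ℝ := Real.sqrt (1 - z^2) with hrdef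
  have hr : 0 < r := Real.sqrt_pos.mpr hc
  have hr2 : r^2 = 1 - z^2 := Real.sq_sqrt hc.le
  have hq : ∀ s : ℝ, (0:ℝ) < (1-z^2) + z^2*s^2 := fun s => by positivity
  -- the antiderivative
  set K : ℝ := z*(1+2*z^2)/(2*(1-z^2)^2*r) with hKdef
  set F : ℝ → ℝ := fun s => s*(3-5*(1-z^2))/(2*(1-z^2)^2*((1-z^2)+z^2*s^2))
      + s/((1-z^2)*((1-z^2)+z^2*s^2)^2) + Real.arctan (z*s/r) * K with hFdef
  have hderiv : ∀ s : ℝ, HasDerivAt F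
      (z^2*(1-s^2)*(3+z^2*(1-s^2))/(1-z^2*(1-s^2))^3) s := by
    intro s
    have hqd : HasDerivAt (fun s : ℝ => (1-z^2) + z^2*s^2) (z^2*(2*s)) s := by
      have := ((hasDerivAt_pow 2 s).const_mul (z^2)).const_add (1-z^2)
      refine this.congr_deriv ?_
      norm_num
    have d1 : HasDerivAt (fun s : ℝ => s*(3-5*(1-z^2))/(2*(1-z^2)^2*((1-z^2)+z^2*s^2)))
        (((3-5*(1-z^2))*(2*(1-z^2)^2*((1-z^2)+z^2*s^2))
          - s*(3-5*(1-z^2))*(2*(1-z^2)^2*(z^2*(2*s))))/(2*(1-z^2)^2*((1-z^2)+z^2*s^2))^2) s := by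
      have hu : HasDerivAt (fun s : ℝ => s*(3-5*(1-z^2))) (3-5*(1-z^2)) s := by
        simpa using (hasDerivAt_id s).mul_const (3-5*(1-z^2))
      have hv := hqd.const_mul (2*(1-z^2)^2)
      have := hu.div hv (by positivity)
      refine this.congr_deriv ?_
      ring
    have d2 : HasDerivAt (fun s : ℝ => s/((1-z^2)*((1-z^2)+z^2*s^2)^2))
        ((((1-z^2)*((1-z^2)+z^2*s^2)^2)
          - s*((1-z^2)*(2*((1-z^2)+z^2*s^2)*(z^2*(2*s)))))/((1-z^2)*((1-z^2)+z^2*s^2)^2)^2) s := by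
      have hv := (hqd.pow 2).const_mul (1-z^2)
      have := (hasDerivAt_id s).div hv (mul_ne_zero hc.ne' (pow_ne_zero _ (hq s).ne'))
      refine this.congr_deriv ?_
      simp only [id, Pi.pow_apply]
      ring
    have dinner : HasDerivAt (fun s : ℝ => z*s/r) (z/r) s := by
      simpa using ((hasDerivAt_id s).const_mul z).div_const r
    have d3 := dinner.arctan.mul_const K
    have harc : 1/(1+(z*s/r)^2)*(z/r)*K
        = z^2*(1+2*z^2)/(2*(1-z^2)^2*((1-z^2)+z^2*s^2)) := by
      have h1 : 1+(z*s/r)^2 = ((1-z^2)+z^2*s^2)/r^2 := by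
        rw [← hr2]
        field_simp
      rw [h1, hKdef]
      field_simp
    rw [harc] at d3
    have := (d1.add d2).add d3
    refine this.congr_deriv ?_
    have hne1 : ((1:ℝ)-z^2) + z^2*s^2 ≠ 0 := (hq s).ne'
    have hne2 : (1:ℝ)-z^2*(1-s^2) ≠ 0 := by nlinarith [hq s]
    have hkey : (1:ℝ)-z^2*(1-s^2) = (1-z^2) + z^2*s^2 := by ring
    rw [hkey]
    field_simp
    ring
  have hGint : IntervalIntegrable
      (fun s : ℝ => z^2*(1-s^2)*(3+z^2*(1-s^2))/(1-z^2*(1-s^2))^3) volume 0 1 := by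
    apply Continuous.intervalIntegrable
    apply Continuous.div (by fun_prop) (by fun_prop)
    intro s
    have := hq s
    have : (1:ℝ)-z^2*(1-s^2) = (1-z^2) + z^2*s^2 := by ring
    exact pow_ne_zero _ (by rw [this]; exact (hq s).ne')
  have hint := intervalIntegral.integral_eq_sub_of_hasDerivAt (fun s _ => hderiv s) hGint
  rw [hint]
  have hF0 : F 0 = 0 := by
    rw [hFdef]
    norm_num
  have hF1 : F 1 = z * (3 * (z * r) + Real.arcsin z * (2 * z ^ 2 + 1)) /
      (2 * (1 - z ^ 2) ^ ((5 : ℝ) / 2)) := by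
    have h52 : (1-z^2) ^ ((5:ℝ)/2) = (1-z^2)^2*r := by
      rw [show ((5:ℝ)/2) = ((2:ℕ):ℝ) + 1/2 by norm_num, Real.rpow_add hc,
        Real.rpow_natCast, ← Real.sqrt_eq_rpow, ← hrdef]
    have harcsin : Real.arcsin z = Real.arctan (z/r) := by
      rw [Real.arcsin_eq_arctan]
      constructor <;> [linarith [abs_lt.mp hz] ; linarith [abs_lt.mp hz]]
    rw [hFdef, h52, harcsin, hKdef]
    simp only [one_pow, mul_one]
    rw [show (1:ℝ) - z^2 + z^2 = 1 by ring]
    field_simp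
    ring
  rw [hF0, hF1]
  ring




theorem zetaCB_neg_one (z : ℝ) (hz : |z| < 1) :
    ∑' m : ℕ, (2 * z) ^ (2 * (m + 1)) / (Nat.choose (2 * (m + 1)) (m + 1) : ℝ) * ((m : ℝ) + 1) =
      z * (3 * (z * Real.sqrt (1 - z ^ 2)) + Real.arcsin z * (2 * z ^ 2 + 1)) /
        (2 * (1 - z ^ 2) ^ ((5 : ℝ) / 2)) := by
  have hz2 : z^2 < 1 := by
    have := abs_nonneg z
    nlinarith [sq_abs z]
  have hnorm : ‖z^2‖ < 1 := by
    rw [Real.norm_eq_abs, abs_of_nonneg (sq_nonneg z)]; exact hz2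
  set f : ℕ → ℝ → ℝ := fun m s => ((m:ℝ)+1)*(2*(m:ℝ)+3)*(z^2*(1-s^2))^(m+1) with hf
  have hfc : ∀ m, Continuous (f m) := fun m => by fun_prop
  have hInt : ∀ m, IntegrableOn (f m) (Set.Ioc (0:ℝ) 1) volume :=
    fun m => (hfc m).integrableOn_Ioc
  -- summability of integrals of norms
  have hb : Summable (fun m : ℕ => ((m:ℝ)+1)*(2*(m:ℝ)+3)*(z^2)^(m+1)) := by
    have h2 := summable_pow_mul_geometric_of_norm_lt_one (R := ℝ) 2 hnorm
    have h1 := summable_pow_mul_geometric_of_norm_lt_one (R := ℝ) 1 hnorm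
    have h0 := summable_pow_mul_geometric_of_norm_lt_one (R := ℝ) 0 hnorm
    exact ((((h2.mul_left 2).add (h1.mul_left 5)).add (h0.mul_left 3)).mul_left
      (z^2)).congr (fun m => by push_cast; ring)
  have hSum : Summable (fun m : ℕ => ∫ s in Set.Ioc (0:ℝ) 1, ‖f m s‖) := by
    apply Summable.of_nonneg_of_le
      (fun m => integral_nonneg (fun s => norm_nonneg _)) (fun m => ?_) hb
    have hbd : ∀ᵐ s ∂(volume.restrict (Set.Ioc (0:ℝ) 1)),
        ‖f m s‖ ≤ ((m:ℝ)+1)*(2*(m:ℝ)+3)*(z^2)^(m+1) := by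
      filter_upwards [ae_restrict_mem measurableSet_Ioc] with s hs
      have h1s : 0 ≤ 1 - s^2 := by nlinarith [hs.1, hs.2]
      have h2s : z^2*(1-s^2) ≤ z^2 := by nlinarith [sq_nonneg z]
      rw [hf, Real.norm_eq_abs, abs_of_nonneg (by positivity)]
      exact mul_le_mul_of_nonneg_left (pow_le_pow_left₀ (by positivity) h2s (m+1))
        (by positivity)
    calc ∫ s in Set.Ioc (0:ℝ) 1, ‖f m s‖
        ≤ ∫ _ in Set.Ioc (0:ℝ) 1, ((m:ℝ)+1)*(2*(m:ℝ)+3)*(z^2)^(m+1) := by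
          apply integral_mono_of_nonneg
            (Filter.Eventually.of_forall (fun s => norm_nonneg _)) (integrable_const _) hbd
      _ = ((m:ℝ)+1)*(2*(m:ℝ)+3)*(z^2)^(m+1) := by
          simp [Real.volume_Ioc]
  calc ∑' m : ℕ, (2 * z) ^ (2 * (m + 1)) / (Nat.choose (2 * (m + 1)) (m + 1) : ℝ) * ((m : ℝ) + 1)
      = ∑' m : ℕ, ∫ s in Set.Ioc (0:ℝ) 1, f m s := by
        refine tsum_congr (fun m => ?_)
        rw [term_eq z m, intervalIntegral.integral_of_le zero_le_one]
    _ = ∫ s in Set.Ioc (0:ℝ) 1, ∑' m : ℕ, f m s :=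
        integral_tsum_of_summable_integral_norm (fun m => hInt m) hSum
    _ = ∫ s in Set.Ioc (0:ℝ) 1, z^2*(1-s^2)*(3+z^2*(1-s^2))/(1-z^2*(1-s^2))^3 := by
        refine setIntegral_congr_fun measurableSet_Ioc (fun s hs => ?_)
        have h1s : 0 ≤ 1 - s^2 := by nlinarith [hs.1, hs.2]
        have h0w : 0 ≤ z^2*(1-s^2) := by positivity
        have h1w : z^2*(1-s^2) < 1 := by nlinarith [sq_nonneg z, sq_nonneg s]
        exact (hasSum_aux h0w h1w).tsum_eq
    _ = ∫ s in (0:ℝ)..1, z^2*(1-s^2)*(3+z^2*(1-s^2))/(1-z^2*(1-s^2))^3 :=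
        (intervalIntegral.integral_of_le zero_le_one).symm
    _ = z * (3 * (z * Real.sqrt (1 - z ^ 2)) + Real.arcsin z * (2 * z ^ 2 + 1)) /
        (2 * (1 - z ^ 2) ^ ((5 : ℝ) / 2)) := integral_G z hz
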